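/- The first-order coefficient in the ε-expansion of the slow manifold S²_ε of the desingularized Brusselator is φ₁(θ) = -φ₀(θ)cos θ/(2a(2cos θ - sin θ)); concretely, with f₀, g₀, f₂, g₂ as in the paper's expansion and φ₀² = cos θ(sin θ - cos θ)/a, the formula φ₂ = (f₂·φ₀' - g₂)/(∂_r g₀ - φ₀'·∂_r f₀) evaluated at (θ, φ₀(θ)) simplifies to -φ₀(θ)cos θ/(2a(2cos θ - sin θ)) for θ ∈ (arctan 2, π/2). -/

import Mathlib

open Real

/-- The first-order coefficient in the ε-expansion of the slow manifold `S²_ε`: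
with `f₀, g₀, f₂, g₂` as in the paper, `φ₀² = cos θ(sin θ - cos θ)/a` and
`φ₀' = (-sin θ(sin θ - cos θ) + cos θ(sin θ + cos θ))/(2aφ₀)`, the formula
`(f₂ φ₀' - g₂)/(∂_r g₀ - φ₀' ∂_r f₀)` evaluated at `(θ, φ₀(θ))` simplifies to
`-φ₀(θ) cos θ/(2a(2cos θ - sin θ))` for `θ ∈ (arctan 2, π/2)`. -/
theorem slow_manifold_first_order_coefficient (a : ℝ) (ha : 0 < a)
    (p f₀ g₀ f₂ g₂ : ℝ → ℝ → ℝ) (φ₀ dφ₀ : ℝ → ℝ)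
    (hp : p = fun θ r => a * r ^ 2 - cos θ * (sin θ - cos θ))
    (hf₀ : f₀ = fun θ r => -sin θ * (sin θ - cos θ) * p θ r)
    (hg₀ : g₀ = fun θ r => -r * cos θ * (sin θ - cos θ) * p θ r)
    (hf₂ : f₂ = fun θ r => -r ^ 2 * cos θ * (sin θ - cos θ))
    (hg₂ : g₂ = fun θ r => r ^ 3 * sin θ * (sin θ - cos θ))
    (hφ₀ : φ₀ = fun θ => Real.sqrt (cos θ * (sin θ - cos θ) / a))
    (hdφ₀ : dφ₀ = fun θ =>
      (-sin θ * (sin θ - cos θ) + cos θ * (sin θ + cos θ)) / (2 * a * φ₀ θ)) :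
    ∀ θ : ℝ, arctan 2 < θ → θ < π / 2 →
      (f₂ θ (φ₀ θ) * dφ₀ θ - g₂ θ (φ₀ θ)) /
          (deriv (fun r => g₀ θ r) (φ₀ θ) - dφ₀ θ * deriv (fun r => f₀ θ r) (φ₀ θ)) =
        -(φ₀ θ) * cos θ / (2 * a * (2 * cos θ - sin θ)) := by
  intro θ h1 h2
  have harc : (0:ℝ) < arctan 2 := by
    have := Real.arctan_strictMono (show (0:ℝ) < 2 by norm_num)
    simpa using this
  have hθ0 : 0 < θ := harc.trans h1
  have hc : 0 < cos θ := Real.cos_pos_of_mem_Ioo ⟨by linarith [Real.pi_pos], h2⟩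
  have htan : 2 < tan θ := by
    have := Real.tan_lt_tan_of_lt_of_lt_pi_div_two
      (x := arctan 2) (y := θ) (Real.neg_pi_div_two_lt_arctan 2) h2 h1
    simpa [Real.tan_arctan] using this
  have hs2c : 2 * cos θ < sin θ := by
    rw [Real.tan_eq_sin_div_cos] at htan
    have := (lt_div_iff₀ hc).mp htan
    linarith
  have hs : 0 < sin θ := by nlinarith
  have hd : 0 < sin θ - cos θ := by nlinarith
  set c := cos θ with hcθ
  set s := sin θ with hsθ
  set x := φ₀ θ with hx
  have hx2 : x ^ 2 = c * (s - c) / a := by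
    rw [hx, hφ₀]
    exact Real.sq_sqrt (by positivity)
  have hxpos : 0 < x := by
    rw [hx, hφ₀]
    exact Real.sqrt_pos.mpr (by positivity)
  have hpyth : s ^ 2 + c ^ 2 = 1 := Real.sin_sq_add_cos_sq θ
  -- derivatives
  have hDg : deriv (fun r => g₀ θ r) x = -(3 * a * c * (s - c)) * x ^ 2 + (c * (s - c)) ^ 2 := by
    have h : (fun r => g₀ θ r) = fun r : ℝ => -(a * c * (s - c)) * r ^ 3 + (c * (s - c)) ^ 2 * r := by
      funext r; rw [hg₀, hp]; ring
    rw [h]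
    have h3 : HasDerivAt (fun r : ℝ => -(a * c * (s - c)) * r ^ 3 + (c * (s - c)) ^ 2 * r)
        (-(a * c * (s - c)) * (3 * x ^ 2) + (c * (s - c)) ^ 2 * 1) x := by
      exact ((hasDerivAt_pow 3 x).const_mul _).add ((hasDerivAt_id x).const_mul _) |>.congr_deriv
        (by norm_num)
    rw [h3.deriv]; ring
  have hDf : deriv (fun r => f₀ θ r) x = -(2 * a * s * (s - c)) * x := by
    have h : (fun r => f₀ θ r) = fun r : ℝ => -(a * s * (s - c)) * r ^ 2 + s * (s - c) * (c * (s - c)) := by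
      funext r; rw [hf₀, hp]; ring
    rw [h]
    have h3 : HasDerivAt (fun r : ℝ => -(a * s * (s - c)) * r ^ 2 + s * (s - c) * (c * (s - c)))
        (-(a * s * (s - c)) * (2 * x) + 0) x := by
      refine (((hasDerivAt_pow 2 x).const_mul _).add (hasDerivAt_const x _)).congr_deriv ?_
      norm_num
    rw [h3.deriv]; ring
  have hdφ : dφ₀ θ = (-s * (s - c) + c * (s + c)) / (2 * a * x) := by rw [hdφ₀]
  have hf₂' : f₂ θ x = -x ^ 2 * c * (s - c) := by rw [hf₂]
  have hg₂' : g₂ θ x = x ^ 3 * s * (s - c) := by rw [hg₂]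
  rw [hDg, hDf, hdφ, hf₂', hg₂']
  have hax : (2 * a * x) ≠ 0 := by positivity
  have hax2 : a * x ^ 2 = c * (s - c) := by rw [hx2]; field_simp
  -- numerator
  have hN : -x ^ 2 * c * (s - c) * ((-s * (s - c) + c * (s + c)) / (2 * a * x)) - x ^ 3 * s * (s - c)
      = -(x * c * (s - c)) / (2 * a) := by
    field_simp
    linear_combination (-2*s) * hax2 + (-c) * hpyth
  -- denominator
  have hD : -(3 * a * c * (s - c)) * x ^ 2 + (c * (s - c)) ^ 2 -
      (-s * (s - c) + c * (s + c)) / (2 * a * x) * (-(2 * a * s * (s - c)) * x)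
      = (s - c) * (2 * c - s) := by
    field_simp
    linear_combination (-3*c) * hax2 + (2*c-s) * hpyth
  rw [hN, hD]
  have h2cs : 2 * c - s ≠ 0 := by linarith
  have hdne : s - c ≠ 0 := ne_of_gt hd
  field_simp
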